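/- Under the tree construction below, for every duplicate-free sequence s over [k] of length at most H−1 and every action a ∈ [k] with a ∉ s, the coefficient σ(s,a) satisfies γ ≤ σ(s,a) ≤ 1. -/

import Mathlib

open scoped InnerProductSpace

/-- In the lower-bound tree construction, all recursively defined coefficients `σ(s,a)`
(for a duplicate-free sequence `s` of length at most `H−1` and an action `a ∉ s`)
lie in the interval `[γ, 1]`. -/
theorem stmt_3 (k d H : ℕ) (hk : 2 ≤ k) (hd : 2 ≤ d) (hH : 1 ≤ H)
    (γ : ℝ) (hγ0 : 0 < γ) (hγ14 : γ ≤ 1 / 4)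
    (v : Fin k → EuclideanSpace ℝ (Fin (d - 1)))
    (hv : ∀ a, ‖v a‖ = 1)
    (hvv : ∀ a b : Fin k, a ≠ b → |(⟪v a, v b⟫_ℝ : ℝ)| ≤ γ)
    (x : ℝ) (hx : x = (1 - γ) / (2 * γ))
    (σ : List (Fin k) → Fin k → ℝ)
    (hσnil : ∀ a : Fin k, σ [] a = 1)
    (hσcons : ∀ (s : List (Fin k)) (a a' : Fin k),
      (s ++ [a]).Nodup → (s ++ [a]).length ≤ H - 1 → a' ∉ s ++ [a] →
      σ (s ++ [a]) a' = σ s a * x * (⟪v a, v a'⟫_ℝ : ℝ) + (1 + γ) / 2) :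
    ∀ s : List (Fin k), s.Nodup → s.length ≤ H - 1 →
      ∀ a : Fin k, a ∉ s → γ ≤ σ s a ∧ σ s a ≤ 1 := by
  intro s
  induction s using List.reverseRecOn with
  | nil =>
    intro _ _ a _
    rw [hσnil]
    constructor <;> linarith
  | append_singleton t b ih =>
    intro hnd hlen a ha
    have hsplit := List.nodup_append'.mp hnd
    have hndt : t.Nodup := hsplit.1
    have hbt : b ∉ t := by
      intro hb
      exact hsplit.2.2 hb (List.mem_singleton_self b)
    have hlent : t.length ≤ H - 1 := by
      simp only [List.length_append, List.length_singleton] at hlen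
      omega
    obtain ⟨h1, h2⟩ := ih hndt hlent b hbt
    rw [hσcons t b a hnd hlen ha]
    have hba : b ≠ a := by
      intro h; subst h; exact ha (by simp)
    have hip := hvv b a hba
    have hxγ : x * γ = (1 - γ) / 2 := by
      rw [hx]; field_simp
    have hx0 : 0 ≤ x := by
      rw [hx]
      apply div_nonneg <;> linarith
    have hip1 : ⟪v b, v a⟫_ℝ ≤ γ := (abs_le.mp hip).2
    have hip2 : -γ ≤ ⟪v b, v a⟫_ℝ := (abs_le.mp hip).1
    have hc : 0 ≤ σ t b * x := mul_nonneg (by linarith) hx0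
    have hcx : σ t b * x ≤ x := by nlinarith
    have hu1 : σ t b * x * ⟪v b, v a⟫_ℝ ≤ σ t b * x * γ :=
      mul_le_mul_of_nonneg_left hip1 hc
    have hu2 : σ t b * x * γ ≤ x * γ := mul_le_mul_of_nonneg_right hcx hγ0.le
    have hl1 : σ t b * x * (-γ) ≤ σ t b * x * ⟪v b, v a⟫_ℝ :=
      mul_le_mul_of_nonneg_left hip2 hc
    constructor <;> nlinarith
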